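/- Let A, B, C, D be matrices in SU(2), let α = (α₁,α₂,α₃) be a real 3-vector, and set 𝒰 = (A ⊗ B) · exp(−i H_α) · (C ⊗ D) and W = M† 𝒰 M. Then the multiset of eigenvalues (with multiplicity) of the matrix Wᵀ W is { e^{−2iλ_j(α)} : j = 1,…,4 }, where λ(α) = (α₁+α₂−α₃, α₁−α₂+α₃, −α₁+α₂+α₃, −α₁−α₂−α₃). (This justifies the method of computing the interaction content of a gate from the eigenvalues of 𝒰ᵀ𝒰 taken in the magic basis.) -/

import Mathlib

open Matrix Complex Real NormedSpace

noncomputable section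

/-- Pauli matrix `σ₁`. -/
def σ1 : Matrix (Fin 2) (Fin 2) ℂ := !![0, 1; 1, 0]
/-- Pauli matrix `σ₂`. -/
def σ2 : Matrix (Fin 2) (Fin 2) ℂ := !![0, -I; I, 0]
/-- Pauli matrix `σ₃`. -/
def σ3 : Matrix (Fin 2) (Fin 2) ℂ := !![1, 0; 0, -1]

/-- Kronecker product of two `2×2` matrices as a `4×4` matrix, with the index ordering
`|00⟩,|01⟩,|10⟩,|11⟩` (i.e. index `2*i+j` corresponds to `|i⟩⊗|j⟩`). -/
def kron (A B : Matrix (Fin 2) (Fin 2) ℂ) : Matrix (Fin 4) (Fin 4) ℂ :=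
  Matrix.of fun i j =>
    A ⟨i.val / 2, by have := i.isLt; omega⟩ ⟨j.val / 2, by have := j.isLt; omega⟩ *
      B ⟨i.val % 2, by have := i.isLt; omega⟩ ⟨j.val % 2, by have := j.isLt; omega⟩

/-- The Hamiltonian `H_α = α₁ σ₁⊗σ₁ + α₂ σ₂⊗σ₂ + α₃ σ₃⊗σ₃`. -/
def Hmat (a : Fin 3 → ℝ) : Matrix (Fin 4) (Fin 4) ℂ :=
  (a 0 : ℂ) • kron σ1 σ1 + (a 1 : ℂ) • kron σ2 σ2 + (a 2 : ℂ) • kron σ3 σ3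

/-- The magic basis matrix: column `j` is the `j`-th magic basis vector, written in the
computational basis `|00⟩,|01⟩,|10⟩,|11⟩`. -/
def Mmag : Matrix (Fin 4) (Fin 4) ℂ :=
  !![0,                      1 / (Real.sqrt 2 : ℂ), -I / (Real.sqrt 2 : ℂ), 0;
     -I / (Real.sqrt 2 : ℂ), 0,                     0,                      1 / (Real.sqrt 2 : ℂ);
     -I / (Real.sqrt 2 : ℂ), 0,                     0,                      -(1 / (Real.sqrt 2 : ℂ));
     0,                      1 / (Real.sqrt 2 : ℂ), I / (Real.sqrt 2 : ℂ),  0]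

/-- `λ(α) = (α₁+α₂−α₃, α₁−α₂+α₃, −α₁+α₂+α₃, −α₁−α₂−α₃)`, the vector of eigenvalues of `H_α`
in the magic basis. -/
def lamv (a : Fin 3 → ℝ) : Fin 4 → ℝ :=
  ![a 0 + a 1 - a 2, a 0 - a 1 + a 2, -a 0 + a 1 + a 2, -a 0 - a 1 - a 2]

lemma sqrt2_sq : ((Real.sqrt 2 : ℝ) : ℂ) * ((Real.sqrt 2 : ℝ) : ℂ) = 2 := by
  norm_cast
  exact Real.mul_self_sqrt (by norm_num)

lemma sqrt2_ne : ((Real.sqrt 2 : ℝ) : ℂ) ≠ 0 := by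
  simp [Real.sqrt_eq_zero']

set_option maxHeartbeats 1600000 in
lemma kron_mul (A B C D : Matrix (Fin 2) (Fin 2) ℂ) :
    kron A B * kron C D = kron (A * C) (B * D) := by
  ext i j
  fin_cases i <;> fin_cases j <;>
    simp [kron, Matrix.mul_apply, Fin.sum_univ_four, Fin.sum_univ_two, show ((3:Fin 4):ℕ)=3 from rfl] <;> ring

set_option maxHeartbeats 1600000 in
lemma kron_transpose (A B : Matrix (Fin 2) (Fin 2) ℂ) :
    (kron A B)ᵀ = kron Aᵀ Bᵀ := by
  ext i j
  fin_cases i <;> fin_cases j <;> simp [kron, show ((3:Fin 4):ℕ)=3 from rfl]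


lemma sqrt2_pow2 : ((Real.sqrt 2 : ℝ) : ℂ)^2 = 2 := by rw [sq]; exact sqrt2_sq
lemma sqrt2_pow3 : ((Real.sqrt 2 : ℝ) : ℂ)^3 = 2 * ((Real.sqrt 2 : ℝ) : ℂ) := by
  rw [pow_succ, sqrt2_pow2]
lemma sqrt2_pow4 : ((Real.sqrt 2 : ℝ) : ℂ)^4 = 4 := by
  rw [show (4:ℕ)=2+2 from rfl, pow_add, sqrt2_pow2]; norm_num
lemma sqrt2_pow5 : ((Real.sqrt 2 : ℝ) : ℂ)^5 = 4 * ((Real.sqrt 2 : ℝ) : ℂ) := by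
  rw [pow_succ, sqrt2_pow4]
lemma sqrt2_pow6 : ((Real.sqrt 2 : ℝ) : ℂ)^6 = 8 := by
  rw [pow_succ, sqrt2_pow5, mul_assoc, sqrt2_sq]; norm_num

set_option maxHeartbeats 1600000 in
lemma Hdiag (a : Fin 3 → ℝ) :
    Mmagᴴ * Hmat a * Mmag = Matrix.diagonal (fun j => (lamv a j : ℂ)) := by
  have h2 := sqrt2_sq
  have hne := sqrt2_ne
  ext i j
  fin_cases i <;> fin_cases j <;>
    simp [Mmag, Hmat, kron, σ1, σ2, σ3, lamv, Matrix.mul_apply, Fin.sum_univ_four, show ((3:Fin 4):ℕ)=3 from rfl,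
      Matrix.diagonal, Matrix.conjTranspose_apply] <;>
    field_simp <;> ring_nf <;> simp [Complex.I_sq, sqrt2_pow2, sqrt2_pow3, sqrt2_pow4, sqrt2_pow5, sqrt2_pow6] <;> ring_nf

/-- The fixed matrix `M Mᵀ` (equal to `-(σ₂⊗σ₂)`). -/
def Jmat : Matrix (Fin 4) (Fin 4) ℂ := !![0,0,0,1; 0,0,-1,0; 0,-1,0,0; 1,0,0,0]

lemma Jmat_eq : Jmat = -(kron σ2 σ2) := by
  ext i j
  fin_cases i <;> fin_cases j <;>
    simp [Jmat, kron, σ2, Matrix.vecHead, Matrix.vecTail, show ((3:Fin 4):ℕ)=3 from rfl]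


set_option maxHeartbeats 800000 in
lemma C1 : Mmagᴴ * Mmag = 1 := by
  have h2 := sqrt2_sq
  have hne := sqrt2_ne
  ext i j
  fin_cases i <;> fin_cases j <;>
    simp [Mmag, Matrix.mul_apply, Fin.sum_univ_four, Matrix.one_apply,
      Matrix.conjTranspose_apply] <;>
    (try field_simp) <;> (try ring_nf) <;>
    (try simp [Complex.I_sq, sqrt2_pow2, sqrt2_pow3, sqrt2_pow4, sqrt2_pow5, sqrt2_pow6]) <;>
    (try ring_nf)

lemma C2 : Mmag * Mmagᴴ = 1 := mul_eq_one_comm.mp C1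

set_option maxHeartbeats 800000 in
lemma C5 : (Mmagᴴ)ᵀ * Mmagᴴ = Jmat := by
  have h2 := sqrt2_sq
  have hne := sqrt2_ne
  ext i j
  fin_cases i <;> fin_cases j <;>
    simp [Mmag, Jmat, Matrix.mul_apply, Fin.sum_univ_four, Matrix.conjTranspose_apply,
      Matrix.transpose_apply, Matrix.vecHead, Matrix.vecTail] <;>
    (try field_simp) <;> (try ring_nf) <;>
    (try simp [Complex.I_sq, sqrt2_pow2, sqrt2_pow3, sqrt2_pow4, sqrt2_pow5, sqrt2_pow6]) <;>
    (try ring_nf)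

set_option maxHeartbeats 800000 in
lemma C4 : Mmagᵀ * Jmat * Mmag = 1 := by
  have h2 := sqrt2_sq
  have hne := sqrt2_ne
  ext i j
  fin_cases i <;> fin_cases j <;>
    simp [Mmag, Jmat, Matrix.mul_apply, Fin.sum_univ_four, Matrix.one_apply,
      Matrix.transpose_apply, Matrix.vecHead, Matrix.vecTail] <;>
    (try field_simp) <;> (try ring_nf) <;>
    (try simp [Complex.I_sq, sqrt2_pow2, sqrt2_pow3, sqrt2_pow4, sqrt2_pow5, sqrt2_pow6]) <;>
    (try ring_nf)

lemma su2_sigma2 (A : Matrix (Fin 2) (Fin 2) ℂ) (h : A.det = 1) : Aᵀ * σ2 * A = σ2 := by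
  rw [Matrix.det_fin_two] at h
  ext i j
  fin_cases i <;> fin_cases j <;>
    simp [σ2, Matrix.mul_apply, Fin.sum_univ_two] <;>
    (first
      | linear_combination (-Complex.I) * h
      | linear_combination Complex.I * h
      | ring)

lemma kron_orth (A B : Matrix (Fin 2) (Fin 2) ℂ) (hA : A.det = 1) (hB : B.det = 1) :
    (kron A B)ᵀ * Jmat * kron A B = Jmat := by
  rw [kron_transpose, Jmat_eq, Matrix.mul_neg, Matrix.neg_mul, kron_mul, kron_mul,
    su2_sigma2 A hA, su2_sigma2 B hB]

lemma magic_orth (U : Matrix (Fin 4) (Fin 4) ℂ) (hU : Uᵀ * Jmat * U = Jmat) :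
    (Mmagᴴ * U * Mmag)ᵀ * (Mmagᴴ * U * Mmag) = 1 := by
  have e1 : (Mmagᴴ)ᵀ * (Mmagᴴ * (U * Mmag)) = Jmat * (U * Mmag) := by
    rw [← Matrix.mul_assoc, C5]
  have e2 : Uᵀ * (Jmat * (U * Mmag)) = Jmat * Mmag := by
    simp only [← Matrix.mul_assoc]; rw [hU]
  simp only [Matrix.transpose_mul, Matrix.mul_assoc]
  rw [e1, e2, ← Matrix.mul_assoc, C4]

lemma charpoly_sim (A P S : Matrix (Fin 4) (Fin 4) ℂ) (h1 : S * P = 1) :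
    (S * A * P).charpoly = A.charpoly := by
  have h2 : P * S = 1 := mul_eq_one_comm.mp h1
  let f : ℂ →+* Polynomial ℂ := Polynomial.C
  have hmap : ∀ X Y : Matrix (Fin 4) (Fin 4) ℂ, (X * Y).map f = X.map f * Y.map f :=
    fun X Y => Matrix.map_mul
  have h1' : S.map f * P.map f = 1 := by rw [← hmap, h1, Matrix.map_one f f.map_zero f.map_one]
  have hcm : Matrix.charmatrix (S * A * P) = S.map f * Matrix.charmatrix A * P.map f := by
    unfold Matrix.charmatrix
    have hsc : ∀ Y : Matrix (Fin 4) (Fin 4) (Polynomial ℂ),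
        Commute (Matrix.scalar (Fin 4) (Polynomial.X : Polynomial ℂ)) Y :=
      fun Y => Matrix.scalar_commute _ (fun r => Commute.all _ r) Y
    rw [Matrix.mul_sub, Matrix.sub_mul]
    congr 1
    · have : S.map f * Matrix.scalar (Fin 4) (Polynomial.X : Polynomial ℂ) * P.map f =
          Matrix.scalar (Fin 4) (Polynomial.X : Polynomial ℂ) := by
        rw [Matrix.mul_assoc, (hsc (P.map f)).eq, ← Matrix.mul_assoc, h1', Matrix.one_mul]
      exact this.symm
    · simp only [RingHom.mapMatrix_apply]
      rw [hmap, hmap, Matrix.mul_assoc]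
  unfold Matrix.charpoly
  rw [hcm, Matrix.det_mul, Matrix.det_mul]
  have : (S.map f).det * (P.map f).det = 1 := by rw [← Matrix.det_mul, h1', Matrix.det_one]
  calc (S.map f).det * (Matrix.charmatrix A).det * (P.map f).det
      = (Matrix.charmatrix A).det * ((S.map f).det * (P.map f).det) := by ring
    _ = (Matrix.charmatrix A).det := by rw [this, mul_one]

lemma charpoly_diag (d : Fin 4 → ℂ) :
    (Matrix.diagonal d).charpoly = ∏ j : Fin 4, (Polynomial.X - Polynomial.C (d j)) := by
  have : Matrix.charmatrix (Matrix.diagonal d) =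
      Matrix.diagonal (fun j => (Polynomial.X : Polynomial ℂ) - Polynomial.C (d j)) := by
    ext i j
    rcases eq_or_ne i j with rfl | hij
    · simp
    · simp [Matrix.charmatrix_apply_ne _ _ _ hij, Matrix.diagonal_apply_ne _ hij]
  rw [Matrix.charpoly, this, Matrix.det_diagonal]

theorem stmt18 (A B C D : Matrix (Fin 2) (Fin 2) ℂ)
    (hA : A ∈ Matrix.specialUnitaryGroup (Fin 2) ℂ)
    (hB : B ∈ Matrix.specialUnitaryGroup (Fin 2) ℂ)
    (hC : C ∈ Matrix.specialUnitaryGroup (Fin 2) ℂ)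
    (hD : D ∈ Matrix.specialUnitaryGroup (Fin 2) ℂ)
    (α : Fin 3 → ℝ) :
    ((Mmagᴴ * (kron A B * NormedSpace.exp (-(I • Hmat α)) * kron C D) * Mmag)ᵀ *
        (Mmagᴴ * (kron A B * NormedSpace.exp (-(I • Hmat α)) * kron C D) * Mmag)).charpoly =
      ∏ j : Fin 4,
        (Polynomial.X - Polynomial.C (Complex.exp (-(2 * I * (lamv α j))))) := by
  have hdA : A.det = 1 := (Matrix.mem_specialUnitaryGroup_iff.mp hA).2
  have hdB : B.det = 1 := (Matrix.mem_specialUnitaryGroup_iff.mp hB).2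
  have hdC : C.det = 1 := (Matrix.mem_specialUnitaryGroup_iff.mp hC).2
  have hdD : D.det = 1 := (Matrix.mem_specialUnitaryGroup_iff.mp hD).2
  set Q1 : Matrix (Fin 4) (Fin 4) ℂ := Mmagᴴ * kron A B * Mmag with hQ1def
  set Q2 : Matrix (Fin 4) (Fin 4) ℂ := Mmagᴴ * kron C D * Mmag with hQ2def
  set Dv : Fin 4 → ℂ := fun j => Complex.exp (-(I * (lamv α j : ℂ))) with hDv
  have hQ1 : Q1ᵀ * Q1 = 1 := magic_orth _ (kron_orth A B hdA hdB)
  have hQ2 : Q2ᵀ * Q2 = 1 := magic_orth _ (kron_orth C D hdC hdD)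
  -- diagonalize the Hamiltonian
  have hH0 : Hmat α = Mmag * Matrix.diagonal (fun j => (lamv α j : ℂ)) * Mmagᴴ := by
    rw [← Hdiag α]
    simp only [← Matrix.mul_assoc]
    rw [C2, Matrix.one_mul, Matrix.mul_assoc, C2, Matrix.mul_one]
  have hneg : -(I • Matrix.diagonal (fun j => (lamv α j : ℂ))) =
      Matrix.diagonal (fun j => -(I * (lamv α j : ℂ))) := by
    ext i j
    rcases eq_or_ne i j with rfl | hij
    · simp
    · simp [Matrix.diagonal_apply_ne _ hij]
  have hH : -(I • Hmat α) = Mmag * Matrix.diagonal (fun j => -(I * (lamv α j : ℂ))) * Mmagᴴ := by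
    rw [hH0, ← hneg]
    simp only [mul_smul_comm, smul_mul_assoc, mul_neg, neg_mul, Matrix.mul_assoc]
  have hMinv : Mmag⁻¹ = Mmagᴴ := Matrix.inv_eq_right_inv C2
  have hMu : IsUnit Mmag := by
    have : Invertible Mmag := invertibleOfRightInverse _ _ C2
    exact isUnit_of_invertible Mmag
  have hE : NormedSpace.exp (-(I • Hmat α)) = Mmag * Matrix.diagonal Dv * Mmagᴴ := by
    rw [hH, ← hMinv, Matrix.exp_conj _ _ hMu, hMinv, Matrix.exp_diagonal]
    congr 1
    congr 1
    funext j
    rw [Pi.exp_def, ← Complex.exp_eq_exp_ℂ]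
  have hW : Mmagᴴ * (kron A B * NormedSpace.exp (-(I • Hmat α)) * kron C D) * Mmag =
      Q1 * Matrix.diagonal Dv * Q2 := by
    rw [hE, hQ1def, hQ2def]
    simp only [Matrix.mul_assoc]
  have hT : (Q1 * Matrix.diagonal Dv * Q2)ᵀ * (Q1 * Matrix.diagonal Dv * Q2) =
      Q2ᵀ * (Matrix.diagonal Dv * Matrix.diagonal Dv) * Q2 := by
    simp only [Matrix.transpose_mul, Matrix.mul_assoc, Matrix.diagonal_transpose]
    rw [show Q1ᵀ * (Q1 * (Matrix.diagonal Dv * Q2)) = Matrix.diagonal Dv * Q2 by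
      rw [← Matrix.mul_assoc, hQ1, Matrix.one_mul]]
  have hDD : Matrix.diagonal Dv * Matrix.diagonal Dv =
      Matrix.diagonal (fun j => Complex.exp (-(2 * I * (lamv α j)))) := by
    have hfun : (fun i => Dv i * Dv i) = fun j => Complex.exp (-(2 * I * (lamv α j))) := by
      funext j
      rw [hDv, ← Complex.exp_add]
      congr 1
      ring
    rw [Matrix.diagonal_mul_diagonal, hfun]
  rw [hW, hT, hDD, charpoly_sim _ Q2 Q2ᵀ hQ2, charpoly_diag]
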